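/- Let (X, μ) be a σ-finite measure space, α > 0, M > 0, and let φ, ū, u ∈ L²(μ) with |u(x)| ≤ M for μ-a.e. x. Suppose that ∫_X (φ + α·u + (u - ū))·(v - u) dμ ≥ 0 for every v ∈ L²(μ) with |v(x)| ≤ M μ-a.e. Then u(x) = P_M( -(φ(x) - ū(x))/(α + 1) ) for μ-a.e. x ∈ X. -/

import Mathlib

open MeasureTheory

private lemma mul_int_aux {X : Type*} [MeasurableSpace X] {μ : Measure X} {f g : X → ℝ}
    (hf : MemLp f 2 μ) (hg : MemLp g 2 μ) : Integrable (fun x => f x * g x) μ := by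
  have h := (((hf.add hg).integrable_sq.sub hf.integrable_sq).sub hg.integrable_sq).div_const 2
  refine h.congr (Filter.Eventually.of_forall fun x => ?_)
  simp only [Pi.sub_apply, Pi.add_apply]
  ring

private lemma clamp_abs_le (M s : ℝ) (hM : 0 < M) : |min (max (-M) s) M| ≤ |s| := by
  rcases le_total s 0 with h | h
  · have hmax : max (-M) s ≤ 0 := max_le (by linarith) h
    rw [abs_le]
    refine ⟨le_min (le_max_of_le_right (neg_abs_le s)) (by linarith [abs_nonneg s]),
      le_trans (min_le_left _ _) (le_trans hmax (abs_nonneg s))⟩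
  · have hmax : max (-M) s = s := max_eq_right (by linarith)
    rw [abs_le, hmax]
    exact ⟨le_min (neg_abs_le s) (by linarith [abs_nonneg s]),
      le_trans (min_le_left _ _) (le_abs_self s)⟩

/-- From the integral variational inequality to the pointwise projection formula:
if `u ∈ L²(μ)` with `|u| ≤ M` a.e. satisfies
`∫ (φ + α u + (u - ū))(v - u) dμ ≥ 0` for every `v ∈ L²(μ)` with `|v| ≤ M` a.e.,
then `u = P_M(-(φ - ū)/(α+1))` a.e., where `P_M s = min (max (-M) s) M`. -/
theorem stmt_7 {X : Type*} [MeasurableSpace X] (μ : Measure X) [SigmaFinite μ]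
    (α M : ℝ) (hα : 0 < α) (hM : 0 < M)
    (φ ubar u : X → ℝ) (hφ : MemLp φ 2 μ) (hubar : MemLp ubar 2 μ) (hu : MemLp u 2 μ)
    (huM : ∀ᵐ x ∂μ, |u x| ≤ M)
    (hvi : ∀ v : X → ℝ, MemLp v 2 μ → (∀ᵐ x ∂μ, |v x| ≤ M) →
      0 ≤ ∫ x, (φ x + α * u x + (u x - ubar x)) * (v x - u x) ∂μ) :
    ∀ᵐ x ∂μ, u x = min (max (-M) (-(φ x - ubar x) / (α + 1))) M := by
  have hα1 : (0:ℝ) < α + 1 := by linarith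
  set g : X → ℝ := fun x => -(φ x - ubar x) / (α + 1) with hg_def
  have hg : MemLp g 2 μ := by
    have h1 : MemLp (fun x => (α + 1)⁻¹ * (-(φ - ubar)) x) 2 μ :=
      ((hφ.sub hubar).neg).const_mul (α + 1)⁻¹
    have h2 : g = fun x => (α + 1)⁻¹ * (-(φ - ubar)) x := by
      funext x
      simp only [hg_def, Pi.neg_apply, Pi.sub_apply, div_eq_inv_mul]
    rw [h2]; exact h1
  set w : X → ℝ := fun x => min (max (-M) (g x)) M with hw_def
  have hw_meas : AEStronglyMeasurable w μ := by
    have hcont : Continuous fun s : ℝ => min (max (-M) s) M :=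
      (continuous_const.max continuous_id).min continuous_const
    exact hcont.comp_aestronglyMeasurable hg.aestronglyMeasurable
  have hw : MemLp w 2 μ :=
    hg.mono hw_meas (Filter.Eventually.of_forall fun x => by
      simpa [Real.norm_eq_abs] using clamp_abs_le M (g x) hM)
  have hwM : ∀ᵐ x ∂μ, |w x| ≤ M := Filter.Eventually.of_forall fun x => by
    rw [abs_le]
    exact ⟨le_min (le_max_left _ _) (by linarith), min_le_right _ _⟩
  have hkey := hvi w hw hwM
  -- pointwise inequality
  have hpt : ∀ x, |u x| ≤ M →
      (φ x + α * u x + (u x - ubar x)) * (w x - u x) ≤ -((α + 1) * (w x - u x) ^ 2) := by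
    intro x hx
    have hgw : (φ x + α * u x + (u x - ubar x)) = (α + 1) * (u x - g x) := by
      simp only [hg_def]
      field_simp
      ring
    rw [hgw]
    have habs := abs_le.mp hx
    have hproj : 0 ≤ (g x - w x) * (w x - u x) := by
      rcases le_total (g x) (-M) with h1 | h1
      · have hw1 : w x = -M := by
          simp only [hw_def]
          rw [max_eq_left h1, min_eq_left (by linarith)]
        rw [hw1]
        exact mul_nonneg_of_nonpos_of_nonpos (by linarith) (by linarith [habs.1])
      · rcases le_total (g x) M with h2 | h2
        · have hw1 : w x = g x := by
            simp only [hw_def]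
            rw [max_eq_right h1, min_eq_left h2]
          rw [hw1]
          simp
        · have hw1 : w x = M := by
            simp only [hw_def]
            rw [min_eq_right (le_max_of_le_right h2)]
          rw [hw1]
          exact mul_nonneg (by linarith) (by linarith [habs.2])
    linarith [mul_nonneg hα1.le hproj]
  -- integrability
  have hF : Integrable (fun x => (φ x + α * u x + (u x - ubar x)) * (w x - u x)) μ := by
    have h1 : MemLp (fun x => φ x + α * u x + (u x - ubar x)) 2 μ :=
      (hφ.add (hu.const_mul α)).add (hu.sub hubar)
    exact mul_int_aux h1 (hw.sub hu)
  have hsq : Integrable (fun x => (α + 1) * (w x - u x) ^ 2) μ :=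
    ((hw.sub hu).integrable_sq.const_mul (α + 1))
  have hmono : ∫ x, (φ x + α * u x + (u x - ubar x)) * (w x - u x) ∂μ ≤
      ∫ x, -((α + 1) * (w x - u x) ^ 2) ∂μ := by
    refine integral_mono_ae hF hsq.neg ?_
    filter_upwards [huM] with x hx
    exact hpt x hx
  rw [integral_neg] at hmono
  have hnn : 0 ≤ᵐ[μ] fun x => (α + 1) * (w x - u x) ^ 2 :=
    Filter.Eventually.of_forall fun x => by positivity
  have hle0 : ∫ x, (α + 1) * (w x - u x) ^ 2 ∂μ ≤ 0 := by linarith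
  have hzero : ∀ᵐ x ∂μ, (α + 1) * (w x - u x) ^ 2 = 0 := by
    have h0 := (integral_eq_zero_iff_of_nonneg_ae hnn hsq).mp
      (le_antisymm hle0 (integral_nonneg_of_ae hnn))
    filter_upwards [h0.le, hnn] with x h1 h2
    exact le_antisymm h1 h2
  filter_upwards [hzero] with x hx
  have h1 : (w x - u x) ^ 2 = 0 := by
    rcases mul_eq_zero.mp hx with h | h
    · linarith
    · exact h
  have h2 := pow_eq_zero_iff (n := 2) (by norm_num) |>.mp h1
  have h3 : w x = u x := by linarith
  exact h3.symm
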